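/- For every positive integer n with binary expansion n = ∑_{k≥0} n_k 2^k and every j ∈ ℕ, if x lies in I_j \ I_{j+1} (i.e. the first j binary coordinates of x are 0 and the j-th is 1), then the Walsh–Dirichlet kernel satisfies |D_n(x)| = |∑_{k=0}^{j-1} n_k 2^k − n_j 2^j|. -/

import Mathlib

open MeasureTheory Finset

noncomputable section

/-- The dyadic group: countable product of ℤ/2. -/
abbrev G := ℕ → ZMod 2

/-- Binary digits of a real number, as an element of the dyadic group. -/
def toG (x : ℝ) : G := fun n => ((⌊x * 2 ^ (n + 1)⌋ : ℤ) : ZMod 2)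

/-- Haar (product) measure on the dyadic group, realized as the pushforward
of Lebesgue measure on `[0,1)` under the binary digit map. -/
def muG : Measure G := (volume.restrict (Set.Ico (0:ℝ) 1)).map toG

/-- Walsh–Paley functions. -/
def walsh (m : ℕ) (x : G) : ℝ :=
  ∏ k ∈ Finset.range m, if m.testBit k then (-1 : ℝ) ^ ((x k).val) else 1

/-- Walsh–Dirichlet kernel. -/
def Dir (n : ℕ) (x : G) : ℝ := ∑ k ∈ Finset.range n, walsh k x

/-- Dyadic interval `I_n` of rank `n` about `0`. -/
def Iset (n : ℕ) : Set G := {x | ∀ i < n, x i = 0}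

/-- `k`-th binary digit of `n`, as a natural number. -/
def bit (n k : ℕ) : ℕ := (n.testBit k).toNat

/-- `α_i(n) = |∑_{k<i} n_k 2^k − n_i 2^i|`. -/
def alpha (n i : ℕ) : ℤ :=
  |(∑ k ∈ Finset.range i, (bit n k : ℤ) * 2 ^ k) - (bit n i : ℤ) * 2 ^ i|

/-- Binary variation `V(n) = n_0 + ∑_{k≥1} |n_k − n_{k−1}|`. -/
def V (n : ℕ) : ℕ :=
  bit n 0 + ∑ k ∈ Finset.range n, if n.testBit (k+1) ≠ n.testBit k then 1 else 0

/-- `A(n)`: indices where consecutive binary digits differ (with `n_{−1} = 0`). -/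
def Aset (n : ℕ) : Finset ℕ :=
  (Finset.range (n+1)).filter
    (fun i => if i = 0 then n.testBit 0 else n.testBit i ≠ n.testBit (i-1))

/-- `S(n) = ∑_{i ∈ A(n)} α_i(n)/2^{i+1}`. -/
def S (n : ℕ) : ℝ := ∑ i ∈ Aset n, (alpha n i : ℝ) / 2 ^ (i+1)

/-- `j`-th binary digit of a real number `t ∈ [0,1)`. -/
def tdig (t : ℝ) (j : ℕ) : ℕ := (⌊t * 2 ^ (j+1)⌋ % 2).toNat

/-- `m = ∑_{i=0}^{N-1} t_{i+1} 2^i`. -/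
def mOf (t : ℝ) (N : ℕ) : ℕ := ∑ i ∈ Finset.range N, tdig t (i+1) * 2 ^ i

/-- Conjugate Walsh–Dirichlet kernel
`D̃_n^{(t)} = D_n − 2 w_m D_m − 2 t_{N+1}(D_n − D_{2^N})` where `m = mOf t N`. -/
def Dconj (t : ℝ) (N n : ℕ) (x : G) : ℝ :=
  Dir n x - 2 * walsh (mOf t N) x * Dir (mOf t N) x
    - 2 * (tdig t (N+1) : ℝ) * (Dir n x - Dir (2^N) x)

/-- Lebesgue constant of the conjugate transform. -/
def Leb (t : ℝ) (N n : ℕ) : ℝ := ∫ x, |Dconj t N n x| ∂muG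

/-- `T(a,b) = {i : 1 ≤ i ≤ N−1, a_i ≠ a_{i−1}, b_i = b_{i−1}}`. -/
def Tset (N a b : ℕ) : Finset ℕ :=
  (Finset.Icc 1 (N-1)).filter
    (fun i => a.testBit i ≠ a.testBit (i-1) ∧ b.testBit i = b.testBit (i-1))

section Aux

lemma walsh_prod_ext (m M M' : ℕ) (x : G) (h : M ≤ M')
    (hb : ∀ k, M ≤ k → m.testBit k = false) :
    ∏ k ∈ Finset.range M, (if m.testBit k then (-1:ℝ)^((x k).val) else 1)
      = ∏ k ∈ Finset.range M', (if m.testBit k then (-1:ℝ)^((x k).val) else 1) := by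
  refine Finset.prod_subset (Finset.range_subset_range.mpr h) ?_
  intro k hk hk'
  rw [hb k (le_of_not_gt (fun hlt => hk' (Finset.mem_range.mpr hlt)))]
  simp

lemma walsh_eq (m M : ℕ) (x : G) (hb : ∀ k, M ≤ k → m.testBit k = false) :
    walsh m x = ∏ k ∈ Finset.range M, (if m.testBit k then (-1:ℝ)^((x k).val) else 1) := by
  have hm : ∀ k, m ≤ k → m.testBit k = false := fun k hk =>
    Nat.testBit_eq_false_of_lt (lt_of_le_of_lt hk (Nat.lt_two_pow_self (n := k)))
  unfold walsh
  rcases le_total m M with h | h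
  · exact walsh_prod_ext m m M x h hm
  · exact (walsh_prod_ext m M m x h hb).symm

lemma testBit_hi (m j k : ℕ) : (2^(j+1) * (m / 2^(j+1))).testBit k =
    (decide (j+1 ≤ k) && m.testBit k) := by
  have h : 2^(j+1) * (m / 2^(j+1)) = (m >>> (j+1)) <<< (j+1) := by
    rw [Nat.shiftLeft_eq, Nat.shiftRight_eq_div_pow]; ring
  rw [h, Nat.testBit_shiftLeft, Nat.testBit_shiftRight]
  by_cases hk : j+1 ≤ k
  · simp [hk, Nat.add_sub_cancel' hk]
  · simp [hk]

lemma walsh_split (m j : ℕ) (x : G) :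
    walsh m x = walsh (2^(j+1) * (m / 2^(j+1))) x * walsh (m % 2^(j+1)) x := by
  have h1 : ∀ k, m ≤ k → m.testBit k = false := fun k hk =>
    Nat.testBit_eq_false_of_lt (lt_of_le_of_lt hk (Nat.lt_two_pow_self (n := k)))
  have h2 : ∀ k, m ≤ k → (2^(j+1) * (m / 2^(j+1))).testBit k = false := by
    intro k hk; rw [testBit_hi, h1 k hk]; simp
  have h3 : ∀ k, m ≤ k → (m % 2^(j+1)).testBit k = false := by
    intro k hk
    exact Nat.testBit_eq_false_of_lt
      (lt_of_le_of_lt (Nat.mod_le _ _) (lt_of_le_of_lt hk (Nat.lt_two_pow_self (n := k))))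
  rw [walsh_eq m m x h1, walsh_eq _ m x h2, walsh_eq _ m x h3,
    ← Finset.prod_mul_distrib]
  refine Finset.prod_congr rfl (fun k _ => ?_)
  rw [testBit_hi, Nat.testBit_mod_two_pow]
  by_cases hk : j+1 ≤ k <;> by_cases hm : m.testBit k
  · simp [hk, hm, Nat.not_lt.2 hk]
  · simp [hk, hm, Nat.not_lt.2 hk]
  · simp [hk, hm, show k < j+1 by omega]
  · simp [hk, hm, show k < j+1 by omega]

lemma abs_walsh (m : ℕ) (x : G) : |walsh m x| = 1 := by
  unfold walsh
  rw [Finset.abs_prod]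
  refine Finset.prod_eq_one (fun k _ => ?_)
  split
  · rw [abs_pow, abs_neg, abs_one, one_pow]
  · exact abs_one

lemma walsh_lo (m j : ℕ) (x : G) (hm : m < 2^(j+1))
    (hx : ∀ i < j, x i = 0) (hxj : x j = 1) :
    walsh m x = if 2^j ≤ m then -1 else 1 := by
  rw [walsh_eq m (j+1) x (fun k hk => Nat.testBit_eq_false_of_lt
    (lt_of_lt_of_le hm (Nat.pow_le_pow_right (by norm_num) hk)))]
  rw [Finset.prod_range_succ]
  have h1 : ∏ k ∈ Finset.range j, (if m.testBit k then (-1:ℝ)^((x k).val) else 1) = 1 := by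
    refine Finset.prod_eq_one (fun k hk => ?_)
    rw [hx k (Finset.mem_range.mp hk)]
    simp
  have hbit : m.testBit j = decide (2^j ≤ m) := by
    rw [Nat.testBit_eq_decide_div_mod_eq]
    rcases Nat.lt_or_ge m (2^j) with h | h
    · simp [Nat.div_eq_of_lt h, Nat.not_le.2 h]
    · have hlt : m / 2^j < 2 := Nat.div_lt_of_lt_mul (by rw [Nat.pow_succ] at hm; omega)
      have hge : 1 ≤ m / 2^j := (Nat.one_le_div_iff ((by positivity))).2 h
      have : m / 2^j = 1 := by omega
      simp [this, h]
  rw [h1, one_mul, hxj, hbit]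
  by_cases h : 2^j ≤ m <;> simp [h, show ((1 : ZMod 2)).val = 1 from rfl]

lemma Dir_formula (j n : ℕ) (x : G) (hx : ∀ i < j, x i = 0) (hxj : x j = 1) :
    Dir n x = walsh (2^(j+1) * (n / 2^(j+1))) x *
      ((((2 * min (n % 2^(j+1)) (2^j) : ℕ) : ℤ) - ((n % 2^(j+1) : ℕ) : ℤ) : ℤ) : ℝ) := by
  have hB : 0 < 2^(j+1) := (by positivity)
  induction n with
  | zero => simp [Dir]
  | succ n ih =>
    rw [Dir, Finset.sum_range_succ, ← Dir, ih]
    rw [walsh_split n j x, walsh_lo (n % 2^(j+1)) j x (Nat.mod_lt _ hB) hx hxj]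
    have hmod : n % 2^(j+1) < 2^(j+1) := Nat.mod_lt _ hB
    rcases Nat.lt_or_ge (n % 2^(j+1) + 1) (2^(j+1)) with h | h
    · have hnd : ¬ (2^(j+1) ∣ (n+1)) := by
        rw [Nat.dvd_iff_mod_eq_zero, Nat.add_mod, Nat.mod_eq_of_lt (show 1 < 2^(j+1) by omega),
          Nat.mod_eq_of_lt h]
        omega
      have hdiv : (n+1) / 2^(j+1) = n / 2^(j+1) := by
        rw [Nat.succ_div, if_neg hnd, Nat.add_zero]
      have hm : (n+1) % 2^(j+1) = n % 2^(j+1) + 1 := by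
        rw [Nat.add_mod, Nat.mod_eq_of_lt (show 1 < 2^(j+1) by omega), Nat.mod_eq_of_lt h]
      rw [hdiv, hm]
      by_cases hle : 2^j ≤ n % 2^(j+1)
      · have h1 : min (n % 2^(j+1)) (2^j) = 2^j := min_eq_right hle
        have h2 : min (n % 2^(j+1) + 1) (2^j) = 2^j := min_eq_right (by omega)
        rw [if_pos hle, h1, h2]
        push_cast
        ring
      · have hlt' : n % 2^(j+1) < 2^j := Nat.lt_of_not_le hle
        have h1 : min (n % 2^(j+1)) (2^j) = n % 2^(j+1) := min_eq_left (by omega)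
        have h2 : min (n % 2^(j+1) + 1) (2^j) = n % 2^(j+1) + 1 := min_eq_left (by omega)
        rw [if_neg hle, h1, h2]
        push_cast
        ring
    · have heq : n % 2^(j+1) = 2^(j+1) - 1 := by omega
      have hd : 2^(j+1) ∣ (n+1) := by
        rw [Nat.dvd_iff_mod_eq_zero, Nat.add_mod, Nat.mod_eq_of_lt (show 1 < 2^(j+1) by omega),
          heq]
        simp [Nat.sub_add_cancel (show 1 ≤ 2^(j+1) by omega)]
      have hm : (n+1) % 2^(j+1) = 0 := Nat.mod_eq_zero_of_dvd hd
      have hp : 0 < 2^j := (by positivity)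
      have hpow : 2^(j+1) = 2 * 2^j := by rw [pow_succ]; ring
      have h1 : min (2^(j+1) - 1) (2^j) = 2^j := min_eq_right (by omega)
      rw [hm, heq, h1, if_pos (show 2^j ≤ 2^(j+1)-1 by omega)]
      have hc : (((2 * 2^j : ℕ) : ℤ) - ((2^(j+1) - 1 : ℕ) : ℤ) : ℤ) = 1 := by
        have h2 : ((2^(j+1) - 1 : ℕ) : ℤ) = (2:ℤ)^(j+1) - 1 := by
          have h3 : (1:ℕ) ≤ 2^(j+1) := by omega
          push_cast [h3]
          ring
        rw [h2]
        push_cast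
        rw [pow_succ]
        ring
      rw [hc]
      simp

end Aux

/-- On `I_j \ I_{j+1}`, `|D_n| = α_j(n)`. -/
theorem abs_Dir_eq_alpha (n j : ℕ) (hn : 0 < n) (x : G)
    (hx : ∀ i < j, x i = 0) (hxj : x j = 1) :
    |Dir n x| = (alpha n j : ℝ) := by
  rw [Dir_formula j n x hx hxj, abs_mul, abs_walsh, one_mul, ← Int.cast_abs]
  congr 1
  have hsum : ∀ i, (∑ k ∈ Finset.range i, (bit n k : ℤ) * 2 ^ k) = ((n % 2^i : ℕ) : ℤ) := by
    intro i
    induction i with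
    | zero => simp
    | succ i ih =>
      rw [Finset.sum_range_succ, ih]
      have hb : (bit n i : ℤ) = ((n / 2^i % 2 : ℕ) : ℤ) := by
        rcases Nat.mod_two_eq_zero_or_one (n / 2^i) with h | h <;>
          simp [bit, Nat.testBit_eq_decide_div_mod_eq, h]
      rw [hb, Nat.mod_pow_succ]
      push_cast
      ring
  rw [alpha, hsum]
  have hbj : (bit n j : ℕ) = n / 2^j % 2 := by
    rcases Nat.mod_two_eq_zero_or_one (n / 2^j) with h | h <;>
      simp [bit, Nat.testBit_eq_decide_div_mod_eq, h]
  have hR : n % 2^(j+1) = n % 2^j + 2^j * (bit n j) := by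
    rw [Nat.mod_pow_succ, hbj]
  have hr : n % 2^j < 2^j := Nat.mod_lt _ ((by positivity))
  rcases Nat.mod_two_eq_zero_or_one (n / 2^j) with h | h
  · have hb0 : bit n j = 0 := by rw [hbj, h]
    have hR0 : n % 2^(j+1) = n % 2^j := by rw [hR, hb0]; ring
    rw [hR0, hb0, min_eq_left (le_of_lt hr)]
    congr 1
    push_cast
    ring
  · have hb1 : bit n j = 1 := by rw [hbj, h]
    have hR1 : n % 2^(j+1) = n % 2^j + 2^j := by rw [hR, hb1]; ring
    rw [hR1, hb1, min_eq_right (Nat.le_add_left _ _)]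
    have e : (((2 * 2^j : ℕ) : ℤ) - ((n % 2^j + 2^j : ℕ) : ℤ))
        = -(((n % 2^j : ℕ) : ℤ) - ((1:ℕ) : ℤ) * 2^j) := by push_cast; ring
    rw [e, abs_neg]
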